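/- Let n ≥ 2 and 0 < r < R, and let E ∈ S_{r,R}. There exist constants ε₀ = ε₀(n,r,R) > 0 and η₁ = η₁(n,r,R) > 0 such that for all ε ∈ (0,ε₀] and all x ∈ ∂E one has η₁ ε^n ≤ min{ |B_ε(x) \ E| , |E ∩ B_ε(x)| }, where |·| denotes Lebesgue measure. -/

import Mathlib

open MeasureTheory Metric Set
open scoped ENNReal

noncomputable section

/-- `Ω` is a bounded open set, star-shaped with respect to the ball `B_r(0)`. -/
def StarShaped (n : ℕ) (r : ℝ) (Ω : Set (EuclideanSpace ℝ (Fin n))) : Prop :=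
  IsOpen Ω ∧ Bornology.IsBounded Ω ∧
    ∀ y ∈ ball (0 : EuclideanSpace ℝ (Fin n)) r, ∀ x ∈ Ω, segment ℝ y x ⊆ Ω

/-- `Ω ∈ S_{r,R}`: star-shaped with respect to `B_r(0)` and contained in `B_R(0)`. -/
def SrR (n : ℕ) (r R : ℝ) (Ω : Set (EuclideanSpace ℝ (Fin n))) : Prop :=
  StarShaped n r Ω ∧ Ω ⊆ ball 0 R

/-- If a set `S` contains a ball of radius `ρ` and is contained in some ball, then
its volume is at least `ρ^n` times the volume of the unit ball. -/
lemma aux_vol_ge (n : ℕ) (hn : 2 ≤ n) (c x : EuclideanSpace ℝ (Fin n)) {ρ ε : ℝ}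
    (hρ : 0 ≤ ρ) {S : Set (EuclideanSpace ℝ (Fin n))}
    (h1 : ball c ρ ⊆ S) (h2 : S ⊆ ball x ε) :
    ρ ^ n * (volume (ball (0 : EuclideanSpace ℝ (Fin n)) 1)).toReal ≤ (volume S).toReal := by
  haveI : Nonempty (Fin n) := ⟨⟨0, by omega⟩⟩
  have hfin : volume S ≠ ⊤ := ((measure_mono h2).trans_lt measure_ball_lt_top).ne
  have hmono : volume (ball c ρ) ≤ volume S := measure_mono h1
  have hball : volume (ball c ρ)
      = ENNReal.ofReal (ρ ^ n) * volume (ball (0 : EuclideanSpace ℝ (Fin n)) 1) := by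
    rw [Measure.addHaar_ball volume c hρ, finrank_euclideanSpace_fin]
  have := ENNReal.toReal_mono hfin hmono
  rw [hball, ENNReal.toReal_mul, ENNReal.toReal_ofReal (by positivity)] at this
  exact this

/-- Density estimate: for `n ≥ 2` and `0 < r < R` there are constants
`ε₀ = ε₀(n,r,R) > 0` and `η₁ = η₁(n,r,R) > 0` such that for every `E ∈ S_{r,R}`,
every `ε ∈ (0,ε₀]` and every `x ∈ ∂E`,
`η₁ ε^n ≤ min { |B_ε(x) \ E| , |E ∩ B_ε(x)| }`. -/
theorem statement1 (n : ℕ) (hn : 2 ≤ n) (r R : ℝ) (hr : 0 < r) (hrR : r < R) :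
    ∃ ε₀ η₁ : ℝ, 0 < ε₀ ∧ 0 < η₁ ∧
      ∀ E : Set (EuclideanSpace ℝ (Fin n)), SrR n r R E →
        ∀ ε : ℝ, 0 < ε → ε ≤ ε₀ → ∀ x ∈ frontier E,
          η₁ * ε ^ n ≤
            min (volume (ball x ε \ E)).toReal (volume (E ∩ ball x ε)).toReal := by
  set ω : ℝ := (volume (ball (0 : EuclideanSpace ℝ (Fin n)) 1)).toReal with hω
  have hωpos : 0 < ω := by
    apply ENNReal.toReal_pos
    · exact (measure_ball_pos volume 0 one_pos).ne'
    · exact measure_ball_lt_top.ne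
  have hRr : (0:ℝ) < R + r := by linarith
  refine ⟨R + r, (r / (8 * (R + r))) ^ n * ω, hRr, by positivity, ?_⟩
  rintro E ⟨⟨hEopen, hEbd, hstar⟩, hER⟩ ε hε hεle x hx
  set s : ℝ := ε / (8 * (R + r)) with hs
  have hs0 : 0 < s := by positivity
  have hsRr : s * (R + r) = ε / 8 := by
    rw [hs]; field_simp
  have hs1 : s < 1 := by nlinarith
  set ρ : ℝ := s * r with hρdef
  have hρ0 : 0 < ρ := by positivity
  -- basic facts about x
  have hxE : x ∉ E := fun h => (hEopen.frontier_eq ▸ hx).2 h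
  have hxcl : x ∈ closure E := frontier_subset_closure hx
  have hxR : ‖x‖ ≤ R := by
    have h1 : x ∈ closure (ball (0 : EuclideanSpace ℝ (Fin n)) R) := closure_mono hER hxcl
    have h2 := closure_ball_subset_closedBall h1
    simpa [mem_closedBall, dist_zero_right] using h2
  -- the key equality: ρ^n * ω = η₁ * ε^n
  have hkey : (r / (8 * (R + r))) ^ n * ω * ε ^ n = ρ ^ n * ω := by
    have : ρ = (r / (8 * (R + r))) * ε := by rw [hρdef, hs]; ring
    rw [this, mul_pow]; ring
  rw [hkey, le_min_iff]
  constructor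
  · -- outer part : ball ((1+s)•x) ρ ⊆ ball x ε \ E
    apply aux_vol_ge n hn ((1 + s) • x) x hρ0.le _ diff_subset
    intro w hw
    have hdw : dist w ((1 + s) • x) < ρ := mem_ball.mp hw
    have hcx : dist ((1 + s) • x) x = s * ‖x‖ := by
      rw [dist_eq_norm]
      have : (1 + s) • x - x = s • x := by module
      rw [this, norm_smul, Real.norm_eq_abs, abs_of_pos hs0]
    constructor
    · -- w ∈ ball x ε
      have : dist w x ≤ dist w ((1 + s) • x) + dist ((1 + s) • x) x := dist_triangle _ _ _
      have hsx : s * ‖x‖ ≤ s * R := by nlinarith [norm_nonneg x]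
      rw [mem_ball]
      have : dist w x < ρ + s * R := by rw [hcx] at this; linarith
      have hρsR : ρ + s * R = ε / 8 := by rw [hρdef]; linarith [hsRr]
      linarith
    · -- w ∉ E
      intro hwE
      set y : EuclideanSpace ℝ (Fin n) := s⁻¹ • ((1 + s) • x - w) with hy
      have hyr : y ∈ ball (0 : EuclideanSpace ℝ (Fin n)) r := by
        rw [mem_ball, dist_zero_right, hy, norm_smul, Real.norm_eq_abs,
          abs_of_pos (inv_pos.mpr hs0)]
        rw [dist_eq_norm] at hdw
        have h1 : ‖(1 + s) • x - w‖ < ρ := by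
          rwa [← norm_neg, neg_sub]
        calc s⁻¹ * ‖(1 + s) • x - w‖ < s⁻¹ * ρ := by
              exact mul_lt_mul_of_pos_left h1 (inv_pos.mpr hs0)
          _ = r := by rw [hρdef]; field_simp
      have hxseg : x ∈ segment ℝ y w := by
        refine ⟨s / (1 + s), 1 / (1 + s), by positivity, by positivity, ?_, ?_⟩
        · field_simp; ring
        · rw [hy]
          have hs1 : (1 : ℝ) + s ≠ 0 := by positivity
          rw [smul_smul]
          have : s / (1 + s) * s⁻¹ = 1 / (1 + s) := by field_simp
          rw [this, smul_sub, smul_smul]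
          have : 1 / (1 + s) * (1 + s) = 1 := by field_simp
          rw [this, one_smul]
          module
      exact hxE (hstar y hyr w hwE hxseg)
  · -- inner part
    obtain ⟨x', hx'E, hx'd⟩ : ∃ x' ∈ E, dist x x' < ε / 4 := by
      rw [Metric.mem_closure_iff] at hxcl
      exact hxcl (ε / 4) (by positivity)
    have hx'R : ‖x'‖ < R := by
      have := hER hx'E
      simpa [mem_ball, dist_zero_right] using this
    apply aux_vol_ge n hn ((1 - s) • x') x hρ0.le _ inter_subset_right
    intro w hw
    have hdw : dist w ((1 - s) • x') < ρ := mem_ball.mp hw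
    constructor
    · -- w ∈ E
      set y : EuclideanSpace ℝ (Fin n) := s⁻¹ • (w - (1 - s) • x') with hy
      have hyr : y ∈ ball (0 : EuclideanSpace ℝ (Fin n)) r := by
        rw [mem_ball, dist_zero_right, hy, norm_smul, Real.norm_eq_abs,
          abs_of_pos (inv_pos.mpr hs0)]
        rw [dist_eq_norm] at hdw
        calc s⁻¹ * ‖w - (1 - s) • x'‖ < s⁻¹ * ρ := by
              exact mul_lt_mul_of_pos_left hdw (inv_pos.mpr hs0)
          _ = r := by rw [hρdef]; field_simp
      have hwseg : w ∈ segment ℝ y x' := by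
        refine ⟨s, 1 - s, hs0.le, by linarith, by ring, ?_⟩
        rw [hy, smul_smul]
        have : s * s⁻¹ = 1 := by field_simp
        rw [this, one_smul]
        module
      exact hstar y hyr x' hx'E hwseg
    · -- w ∈ ball x ε
      rw [mem_ball]
      have hcx' : dist ((1 - s) • x') x' = s * ‖x'‖ := by
        rw [dist_eq_norm]
        have : (1 - s) • x' - x' = (-s) • x' := by module
        rw [this, norm_smul, Real.norm_eq_abs, abs_neg, abs_of_pos hs0]
      have ht : dist w x ≤ dist w ((1 - s) • x') + dist ((1 - s) • x') x' + dist x' x :=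
        dist_triangle4 _ _ _ _
      have hsx : s * ‖x'‖ ≤ s * R := by nlinarith [norm_nonneg x']
      have hρsR : ρ + s * R = ε / 8 := by rw [hρdef]; linarith [hsRr]
      rw [dist_comm x x'] at hx'd
      rw [hcx'] at ht
      linarith
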